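/- Let R be a noetherian ring, p a prime, M a finitely generated p-power torsion R-module with an R-linear action of a finite p-group G, and let 𝔭 be a minimal prime of the support of M. Then the length of (M/M^G)_𝔭 over R_𝔭 is strictly less than the length of M_𝔭 over R_𝔭. -/

import Mathlib

/-- The length of a module, expressed as the Krull dimension of its lattice of submodules. -/
noncomputable def moduleLength (R M : Type) [Ring R] [AddCommGroup M] [Module R M] :
    WithBot ℕ∞ :=
  Order.krullDim (Submodule R M)


section ChainLemmas

variable {A : Type} [Ring A]

/-- Extract an `LTSeries` from a monotone sequence, one element per strict step. -/
lemma exists_ltSeries_of_strictSteps {P : Type*} [PartialOrder P] {m : ℕ}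
    (q : Fin (m + 1) → P) (hq : Monotone q) (J : Finset (Fin m))
    (hJ : ∀ i ∈ J, q i.castSucc < q i.succ) :
    ∃ s : LTSeries P, s.length = J.card := by
  classical
  set t := J.card with ht
  let e : Fin t ≃o {x // x ∈ J} := J.orderIsoOfFin rfl
  let f : Fin (t + 1) → P := fun i =>
    if h : (i : ℕ) < t then q ((e ⟨i, h⟩ : Fin m).castSucc) else q (Fin.last m)
  have hf : StrictMono f := by
    intro i j hij
    have hi : (i : ℕ) < t := lt_of_lt_of_le hij (Nat.lt_succ_iff.mp j.2)
    by_cases hj : (j : ℕ) < t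
    · simp only [f, dif_pos hi, dif_pos hj]
      have he : (e ⟨i, hi⟩ : Fin m) < (e ⟨j, hj⟩ : Fin m) := by
        have : (⟨(i : ℕ), hi⟩ : Fin t) < ⟨(j : ℕ), hj⟩ := hij
        exact e.strictMono this
      calc q ((e ⟨i, hi⟩ : Fin m).castSucc) < q ((e ⟨i, hi⟩ : Fin m).succ) :=
            hJ _ (e ⟨i, hi⟩).2
        _ ≤ q ((e ⟨j, hj⟩ : Fin m).castSucc) := by
            apply hq
            rw [Fin.le_def]
            simp only [Fin.val_succ, Fin.coe_castSucc]
            exact he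
    · simp only [f, dif_pos hi, dif_neg hj]
      calc q ((e ⟨i, hi⟩ : Fin m).castSucc) < q ((e ⟨i, hi⟩ : Fin m).succ) :=
            hJ _ (e ⟨i, hi⟩).2
        _ ≤ q (Fin.last m) := hq (Fin.le_last _)
  exact ⟨⟨t, f, fun i => hf (Fin.castSucc_lt_succ (i := i))⟩, rfl⟩

/-- If all chains in `P` are bounded by `n`, a monotone sequence has at most `n` strict steps. -/
lemma card_strictSteps_le {P : Type*} [PartialOrder P] {n : ℕ}
    (hbd : ∀ s : LTSeries P, s.length ≤ n) {m : ℕ}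
    (q : Fin (m + 1) → P) (hq : Monotone q) (J : Finset (Fin m))
    (hJ : ∀ i ∈ J, q i.castSucc < q i.succ) : J.card ≤ n := by
  obtain ⟨s, hs⟩ := exists_ltSeries_of_strictSteps q hq J hJ
  exact hs ▸ hbd s

/-- Chain bound transfers along surjections (pulling back submodules). -/
lemma chainBound_of_surjective {X Y : Type*} [AddCommGroup X] [Module A X]
    [AddCommGroup Y] [Module A Y] (f : X →ₗ[A] Y) (hf : Function.Surjective f) {n : ℕ}
    (h : ∀ s : LTSeries (Submodule A X), s.length ≤ n) :
    ∀ s : LTSeries (Submodule A Y), s.length ≤ n := by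
  intro s
  have hmono : Monotone (Submodule.comap f : Submodule A Y → Submodule A X) :=
    fun _ _ h => Submodule.comap_mono h
  have hst : StrictMono (Submodule.comap f : Submodule A Y → Submodule A X) :=
    hmono.strictMono_of_injective (Submodule.comap_injective_of_surjective hf)
  simpa using h (s.map (Submodule.comap f) hst)

/-- Chain bound for an extension. -/
lemma chainBound_ext {X : Type*} [AddCommGroup X] [Module A X] (N : Submodule A X)
    {a b : ℕ} (ha : ∀ s : LTSeries (Submodule A N), s.length ≤ a)
    (hb : ∀ s : LTSeries (Submodule A (X ⧸ N)), s.length ≤ b) :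
    ∀ s : LTSeries (Submodule A X), s.length ≤ a + b := by
  classical
  intro s
  set m := s.length with hm
  let q : Fin (m + 1) → Submodule A N := fun i => Submodule.comap N.subtype (s i)
  let r : Fin (m + 1) → Submodule A (X ⧸ N) := fun i => Submodule.map N.mkQ (s i)
  have hqmono : Monotone q := fun i j hij => Submodule.comap_mono (s.monotone hij)
  have hrmono : Monotone r := fun i j hij => Submodule.map_mono (s.monotone hij)
  let J : Finset (Fin m) := Finset.univ.filter fun i => q i.castSucc < q i.succ
  let K : Finset (Fin m) := Finset.univ.filter fun i => r i.castSucc < r i.succ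
  have hJc : J.card ≤ a :=
    card_strictSteps_le ha q hqmono J (fun i hi => (Finset.mem_filter.mp hi).2)
  have hKc : K.card ≤ b :=
    card_strictSteps_le hb r hrmono K (fun i hi => (Finset.mem_filter.mp hi).2)
  have hcover : (Finset.univ : Finset (Fin m)) ⊆ J ∪ K := by
    intro i _
    rw [Finset.mem_union]
    by_contra hc
    push_neg at hc
    obtain ⟨hJi, hKi⟩ := hc
    have hqeq : q i.castSucc = q i.succ := by
      have := hqmono (le_of_lt (Fin.castSucc_lt_succ (i := i)))
      rcases lt_or_eq_of_le this with h | h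
      · exact absurd (by simp only [J, Finset.mem_filter]; exact ⟨Finset.mem_univ i, h⟩) hJi
      · exact h
    have hreq : r i.castSucc = r i.succ := by
      have := hrmono (le_of_lt (Fin.castSucc_lt_succ (i := i)))
      rcases lt_or_eq_of_le this with h | h
      · exact absurd (by simp only [K, Finset.mem_filter]; exact ⟨Finset.mem_univ i, h⟩) hKi
      · exact h
    -- derive s i.castSucc = s i.succ, contradiction
    have hstep : s i.castSucc < s i.succ := s.step i
    have hle : s i.castSucc ≤ s i.succ := le_of_lt hstep
    have h1 : s i.succ ≤ s i.castSucc ⊔ N := by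
      have : Submodule.map N.mkQ (s i.succ) ≤ Submodule.map N.mkQ (s i.castSucc) := hreq.ge
      have h2 := Submodule.map_le_iff_le_comap.mp this
      have h3 : Submodule.comap N.mkQ (Submodule.map N.mkQ (s i.castSucc))
          = s i.castSucc ⊔ LinearMap.ker N.mkQ := Submodule.comap_map_eq _ _
      rw [h3, Submodule.ker_mkQ] at h2
      exact h2
    have h2 : N ⊓ s i.succ = N ⊓ s i.castSucc := by
      have := congrArg (Submodule.map N.subtype) hqeq
      rwa [Submodule.map_comap_subtype, Submodule.map_comap_subtype, eq_comm] at this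
    have : s i.succ = s i.castSucc := by
      have hmod : (s i.castSucc ⊔ N) ⊓ s i.succ = s i.castSucc ⊔ (N ⊓ s i.succ) :=
        sup_inf_assoc_of_le _ hle
      calc s i.succ = (s i.castSucc ⊔ N) ⊓ s i.succ := (inf_eq_right.mpr h1).symm
        _ = s i.castSucc ⊔ (N ⊓ s i.succ) := hmod
        _ = s i.castSucc ⊔ (N ⊓ s i.castSucc) := by rw [h2]
        _ = s i.castSucc := sup_eq_left.mpr inf_le_right
    exact absurd this (ne_of_gt hstep)
  calc m = (Finset.univ : Finset (Fin m)).card := by simp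
    _ ≤ (J ∪ K).card := Finset.card_le_card hcover
    _ ≤ J.card + K.card := Finset.card_union_le _ _
    _ ≤ a + b := Nat.add_le_add hJc hKc

end ChainLemmas
section BoundLemmas
variable {A : Type} [CommRing A]

/-- Submodules of a cyclic module killed by a maximal ideal are `⊥` or `⊤`. -/
lemma chainBound_cyclic {V : Type*} [AddCommGroup V] [Module A V]
    (𝔪 : Ideal A) (h𝔪 : 𝔪.IsMaximal) (hkill : ∀ a ∈ 𝔪, ∀ v : V, a • v = 0) (x : V) :
    ∀ s : LTSeries (Submodule A (Submodule.span A {x})), s.length ≤ 1 := by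
  have hx : x ∈ Submodule.span A {x} := Submodule.mem_span_singleton_self x
  set W := Submodule.span A {x} with hW
  let x' : W := ⟨x, hx⟩
  have key : ∀ W' : Submodule A W, W' = ⊥ ∨ W' = ⊤ := by
    intro W'
    by_cases hW' : W' = ⊥
    · exact Or.inl hW'
    right
    obtain ⟨y, hyW', hy0⟩ := Submodule.exists_mem_ne_zero_of_ne_bot hW'
    obtain ⟨c, hc⟩ := Submodule.mem_span_singleton.mp y.2
    have hcx : c • x' = y := by
      apply Subtype.ext
      simpa using hc
    have hcm : c ∉ 𝔪 := by
      intro hcmem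
      apply hy0
      rw [← hcx]
      apply Subtype.ext
      simpa using hkill c hcmem x
    obtain ⟨d, i, him, hdi⟩ := h𝔪.exists_inv hcm
    have hx'W' : x' ∈ W' := by
      have h1 : (d * c + i) • x' = x' := by rw [hdi, one_smul]
      have h2 : i • x' = 0 := by
        apply Subtype.ext
        simpa using hkill i him x
      have : x' = d • y := by
        calc x' = (d * c + i) • x' := h1.symm
          _ = d • (c • x') + i • x' := by rw [add_smul, mul_smul]
          _ = d • y := by rw [h2, add_zero, hcx]
      rw [this]
      exact Submodule.smul_mem _ d hyW'
    rw [eq_top_iff]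
    intro z _
    obtain ⟨cz, hcz⟩ := Submodule.mem_span_singleton.mp z.2
    have : cz • x' = z := by apply Subtype.ext; simpa using hcz
    rw [← this]
    exact Submodule.smul_mem _ cz hx'W'
  intro s
  by_contra hlen
  push_neg at hlen
  have h2 : 2 ≤ s.length := hlen
  have h01 : s ⟨0, by omega⟩ < s ⟨1, by omega⟩ := s.strictMono (by simp [Fin.lt_def])
  have h12 : s ⟨1, by omega⟩ < s ⟨2, by omega⟩ := s.strictMono (by simp [Fin.lt_def])
  rcases key (s ⟨1, by omega⟩) with h | h
  · rw [h] at h01; exact not_lt_bot h01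
  · rw [h] at h12; exact not_top_lt h12

/-- Chains in a f.g. module killed by a maximal ideal are bounded. -/
lemma chainBound_fg {V : Type*} [AddCommGroup V] [Module A V]
    (𝔪 : Ideal A) (h𝔪 : 𝔪.IsMaximal) (hkill : ∀ a ∈ 𝔪, ∀ v : V, a • v = 0)
    (N : Submodule A V) (hN : N.FG) :
    ∃ n : ℕ, ∀ s : LTSeries (Submodule A N), s.length ≤ n := by
  refine Submodule.fg_induction (R := A) (M := V)
    (motive := fun N _ => ∃ n : ℕ, ∀ s : LTSeries (Submodule A N), s.length ≤ n) ?_ ?_ N hN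
  · intro x
    exact ⟨1, chainBound_cyclic 𝔪 h𝔪 hkill x⟩
  · intro N₁ N₂ _ _ ⟨n₁, h₁⟩ ⟨n₂, h₂⟩
    refine ⟨n₁ + n₂, ?_⟩
    set X := (N₁ ⊔ N₂ : Submodule A V)
    let N' : Submodule A X := Submodule.comap X.subtype N₁
    have ha : ∀ s : LTSeries (Submodule A N'), s.length ≤ n₁ := by
      have e := Submodule.comapSubtypeEquivOfLe (le_sup_left : N₁ ≤ N₁ ⊔ N₂)
      exact chainBound_of_surjective e.symm.toLinearMap e.symm.surjective h₁
    have hb : ∀ s : LTSeries (Submodule A (X ⧸ N')), s.length ≤ n₂ := by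
      let f : N₂ →ₗ[A] (X ⧸ N') :=
        N'.mkQ ∘ₗ Submodule.inclusion (le_sup_right : N₂ ≤ N₁ ⊔ N₂)
      have hf : Function.Surjective f := by
        intro z
        obtain ⟨y, rfl⟩ := Submodule.mkQ_surjective N' z
        obtain ⟨v₁, hv₁, v₂, hv₂, hsum⟩ := Submodule.mem_sup.mp y.2
        refine ⟨⟨v₂, hv₂⟩, ?_⟩
        show N'.mkQ (Submodule.inclusion _ ⟨v₂, hv₂⟩) = N'.mkQ y
        rw [Submodule.mkQ_apply, Submodule.mkQ_apply, Submodule.Quotient.eq]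
        show (_ : X) ∈ Submodule.comap X.subtype N₁
        simp only [Submodule.mem_comap]
        have : ((Submodule.inclusion (le_sup_right : N₂ ≤ N₁ ⊔ N₂) ⟨v₂, hv₂⟩ - y : X) : V)
            = v₂ - y := rfl
        rw [Submodule.coe_subtype, this]
        have : (y : V) = v₁ + v₂ := hsum.symm
        rw [this]
        simpa using Submodule.neg_mem _ hv₁
      exact chainBound_of_surjective f hf h₂
    exact chainBound_ext N' ha hb

/-- Chains in a noetherian module killed by a power of a maximal ideal are bounded. -/
lemma chainBound_pow (𝔪 : Ideal A) (h𝔪 : 𝔪.IsMaximal) :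
    ∀ (k : ℕ) (X : Type) (_ : AddCommGroup X) (_ : Module A X) (_ : IsNoetherian A X),
      (∀ a ∈ 𝔪 ^ k, ∀ x : X, a • x = 0) →
      ∃ n : ℕ, ∀ s : LTSeries (Submodule A X), s.length ≤ n := by
  intro k
  induction k with
  | zero =>
    intro X _ _ _ hkill
    have hsub : Subsingleton X := by
      refine ⟨fun x y => ?_⟩
      have hx := hkill 1 (by simp [Ideal.one_eq_top]) x
      have hy := hkill 1 (by simp [Ideal.one_eq_top]) y
      rw [one_smul] at hx hy
      rw [hx, hy]
    refine ⟨0, fun s => ?_⟩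
    by_contra hlen
    push_neg at hlen
    have hstep := s.step ⟨0, by omega⟩
    haveI := hsub
    have heq : ∀ U V : Submodule A X, U = V := by
      intro U V
      ext z
      rw [Subsingleton.elim z (0 : X)]
      simp
    exact absurd (heq _ _) (ne_of_lt hstep)
  | succ k ih =>
    intro X _ _ _ hkill
    set N := 𝔪 • (⊤ : Submodule A X) with hN
    have hNkill : ∀ a ∈ 𝔪 ^ k, ∀ y : N, a • y = 0 := by
      intro a ha y
      apply Subtype.ext
      have hy : (y : X) ∈ 𝔪 • (⊤ : Submodule A X) := y.2
      have : a • (y : X) = 0 := by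
        refine Submodule.smul_induction_on hy ?_ ?_
        · intro b hb w _
          rw [smul_smul]
          exact hkill (a * b) (by rw [pow_succ]; exact Ideal.mul_mem_mul ha hb) w
        · intro v w hv hw
          rw [smul_add, hv, hw, add_zero]
      simpa using this
    obtain ⟨n₁, h₁⟩ := ih N inferInstance inferInstance inferInstance hNkill
    have hQkill : ∀ a ∈ 𝔪, ∀ v : X ⧸ N, a • v = 0 := by
      intro a ha v
      obtain ⟨x, rfl⟩ := Submodule.Quotient.mk_surjective N v
      rw [← Submodule.Quotient.mk_smul]
      rw [Submodule.Quotient.mk_eq_zero]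
      exact Submodule.smul_mem_smul ha Submodule.mem_top
    obtain ⟨n₂, h₂⟩ := chainBound_fg 𝔪 h𝔪 hQkill ⊤ (IsNoetherian.noetherian ⊤)
    have h₂' : ∀ s : LTSeries (Submodule A (X ⧸ N)), s.length ≤ n₂ :=
      chainBound_of_surjective (Submodule.topEquiv : (⊤ : Submodule A (X ⧸ N)) ≃ₗ[A] _).toLinearMap
        Submodule.topEquiv.surjective h₂
    exact ⟨n₁ + n₂, chainBound_ext N h₁ h₂'⟩

end BoundLemmas
section KrullDim

/-- If `f : X → Y` is a surjection with nonzero kernel and chains of submodules of `X`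
are bounded, then the submodule lattice of `Y` has strictly smaller Krull dimension. -/
lemma krullDim_submodule_lt {A X Y : Type*} [Ring A] [AddCommGroup X] [Module A X]
    [AddCommGroup Y] [Module A Y] (f : X →ₗ[A] Y) (hf : Function.Surjective f)
    (hker : LinearMap.ker f ≠ ⊥) {n : ℕ}
    (hn : ∀ s : LTSeries (Submodule A X), s.length ≤ n) :
    Order.krullDim (Submodule A Y) < Order.krullDim (Submodule A X) := by
  classical
  have hmono : Monotone (Submodule.comap f : Submodule A Y → Submodule A X) :=
    fun _ _ h => Submodule.comap_mono h
  have hst : StrictMono (Submodule.comap f : Submodule A Y → Submodule A X) :=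
    hmono.strictMono_of_injective (Submodule.comap_injective_of_surjective hf)
  -- all chains in Y are bounded by n
  have hbY : ∀ s : LTSeries (Submodule A Y), s.length ≤ n := fun s => by
    simpa using hn (s.map _ hst)
  set P : ℕ → Prop := fun l => ∃ s : LTSeries (Submodule A Y), s.length = l with hP
  have hP0 : P 0 := ⟨RelSeries.singleton _ ⊥, rfl⟩
  set mY := Nat.findGreatest P n with hmY
  have hPm : P mY := Nat.findGreatest_spec (Nat.zero_le n) hP0
  have hmax : ∀ s : LTSeries (Submodule A Y), s.length ≤ mY := fun s =>
    Nat.le_findGreatest (hbY s) ⟨s, rfl⟩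
  obtain ⟨s₀, hs₀⟩ := hPm
  -- build a chain of length mY + 1 in X
  have hbot : (⊥ : Submodule A X) < (s₀.map _ hst).head := by
    rw [bot_lt_iff_ne_bot]
    intro hbot
    apply hker
    have : LinearMap.ker f ≤ (s₀.map _ hst).head := by
      show LinearMap.ker f ≤ Submodule.comap f s₀.head
      rw [← Submodule.comap_bot]
      exact Submodule.comap_mono bot_le
    rw [hbot] at this
    exact le_bot_iff.mp this
  let c : LTSeries (Submodule A X) := (s₀.map _ hst).cons ⊥ hbot
  have hclen : c.length = mY + 1 := by
    show ((s₀.map _ hst).cons ⊥ hbot).length = mY + 1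
    rw [RelSeries.cons_length]
    simp [hs₀]
  have h1' : (⨆ p : LTSeries (Submodule A Y), (p.length : ℕ∞)) ≤ (mY : ℕ∞) :=
    iSup_le fun s => by exact_mod_cast hmax s
  have h1 : Order.krullDim (Submodule A Y) ≤ (mY : WithBot ℕ∞) := by
    rw [Order.krullDim_eq_iSup_length]
    exact_mod_cast h1'
  have h2 : ((mY + 1 : ℕ) : WithBot ℕ∞) ≤ Order.krullDim (Submodule A X) := by
    have := Order.LTSeries.length_le_krullDim c
    rwa [hclen] at this
  refine lt_of_le_of_lt h1 (lt_of_lt_of_le ?_ h2)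
  exact_mod_cast Nat.lt_succ_self mY

end KrullDim
section FixedPoints

/-- An endomorphism `τ` with `τ^p = 1` of a nontrivial `p^n`-torsion module has a
nonzero fixed point. -/
lemma exists_fixed_of_pow_eq_one {R X : Type*} [CommRing R] [AddCommGroup X] [Module R X]
    {p n : ℕ} (hp : p.Prime) (htors : ∀ x : X, (p ^ n : ℕ) • x = 0) [Nontrivial X]
    (τ : Module.End R X) (hτ : τ ^ p = 1) : ∃ x : X, x ≠ 0 ∧ τ x = x := by
  classical
  set u : Module.End R X := τ - 1 with hu
  have hcomm : Commute u (1 : Module.End R X) := Commute.one_right u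
  have hadd : (u + 1) ^ p
      = ∑ m ∈ Finset.range (p + 1), u ^ m * 1 ^ (p - m) * (p.choose m : Module.End R X) :=
    hcomm.add_pow p
  have hup1 : (u + 1) = τ := by rw [hu]; abel
  have hsum : ∑ m ∈ Finset.range (p + 1), u ^ m * (p.choose m : Module.End R X) = 1 := by
    have h1 : (u + 1) ^ p = 1 := by rw [hup1, hτ]
    rw [hadd] at h1
    simpa using h1
  have hppos : 0 < p := hp.pos
  set S : Module.End R X := ∑ m ∈ Finset.Ico 1 p, u ^ m * (p.choose m : Module.End R X) with hS
  have hsum2 : u ^ p + S + 1 = 1 := by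
    rw [Finset.sum_range_succ, Finset.range_eq_Ico,
      Finset.sum_eq_sum_Ico_succ_bot hppos] at hsum
    simp only [pow_zero, one_mul, Nat.choose_self, Nat.choose_zero_right, Nat.cast_one,
      mul_one, zero_add] at hsum
    rw [← hS] at hsum
    calc u ^ p + S + 1 = 1 + S + u ^ p := by abel
      _ = 1 := hsum
  have hSP : u ^ p = -S := by
    have h0 : u ^ p + S = 0 := by
      have := congrArg (fun z => z - 1) hsum2
      simpa using this
    exact eq_neg_of_add_eq_zero_left h0
  -- S = p • w
  set w : Module.End R X := ∑ m ∈ Finset.Ico 1 p, u ^ m * ((p.choose m / p : ℕ) : Module.End R X)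
    with hw
  have hSw : S = p • w := by
    rw [hS, hw, Finset.smul_sum]
    apply Finset.sum_congr rfl
    intro m hm
    obtain ⟨hm1, hm2⟩ := Finset.mem_Ico.mp hm
    have hdvd : p ∣ p.choose m := hp.dvd_choose_self (by omega) hm2
    have hcm : p * (p.choose m / p) = p.choose m := Nat.mul_div_cancel' hdvd
    calc u ^ m * (p.choose m : Module.End R X)
        = u ^ m * ((p : Module.End R X) * ((p.choose m / p : ℕ) : Module.End R X)) := by
          rw [← Nat.cast_mul, hcm]
      _ = (p : Module.End R X) * (u ^ m * ((p.choose m / p : ℕ) : Module.End R X)) := by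
          rw [← mul_assoc, ← (Nat.cast_commute p (u ^ m)).eq, mul_assoc]
      _ = p • (u ^ m * ((p.choose m / p : ℕ) : Module.End R X)) := by
          rw [nsmul_eq_mul]
  have hupw : u ^ p = p • (-w) := by rw [hSP, hSw, smul_neg]
  -- u^(p*n) = 0
  have hnil : ∀ x : X, (u ^ (p * n)) x = 0 := by
    intro x
    have h1 : u ^ (p * n) = (p ^ n : ℕ) • (-w) ^ n := by
      rw [pow_mul, hupw, smul_pow]
    rw [h1, LinearMap.smul_apply, htors]
  by_contra hcon
  push_neg at hcon
  have hinj : Function.Injective u := by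
    intro x y hxy
    by_contra hne
    have hsub : x - y ≠ 0 := sub_ne_zero.mpr hne
    have : τ (x - y) ≠ x - y := fun h => (hcon _ hsub) h
    apply this
    have : u (x - y) = 0 := by rw [map_sub, hxy, sub_self]
    rw [hu] at this
    simp only [LinearMap.sub_apply, Module.End.one_apply] at this
    rw [sub_eq_zero] at this
    exact this
  have hinjn : Function.Injective (u ^ (p * n) : Module.End R X) := by
    induction (p * n) with
    | zero => simpa [Module.End.coe_one] using Function.injective_id
    | succ k ih =>
      rw [pow_succ]
      intro x y hxy
      simp only [Module.End.mul_apply] at hxy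
      exact hinj (ih hxy)
  obtain ⟨x, hx⟩ := exists_ne (0 : X)
  apply hx
  apply hinjn
  rw [hnil x, map_zero]

end FixedPoints
section PGroupFixed

/-- A finite `p`-group acting on a nontrivial `p^n`-torsion module has a nonzero
common fixed point. -/
lemma exists_fixed_of_pgroup {p : ℕ} (hp : p.Prime) :
    ∀ (c : ℕ) (R : Type) (_ : CommRing R) (X : Type) (_ : AddCommGroup X) (_ : Module R X)
      (n : ℕ) (_ : ∀ x : X, (p ^ n : ℕ) • x = 0) (_ : Nontrivial X)
      (G : Type) (_ : Group G) (_ : Finite G) (_ : Nat.card G = c) (_ : ∃ k, c = p ^ k)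
      (ρ : G →* (Module.End R X)ˣ),
      ∃ x : X, x ≠ 0 ∧ ∀ g : G, ((ρ g : Module.End R X)) x = x := by
  intro c
  induction c using Nat.strong_induction_on with
  | _ c IH =>
  intro R _ X _ _ n htors hX G _ _ hcard hpk ρ
  classical
  haveI : Fact p.Prime := ⟨hp⟩
  by_cases hc1 : c ≤ 1
  · -- trivial group
    have hc : Nat.card G = 1 := le_antisymm (hcard ▸ hc1) Nat.card_pos
    have hsub : Subsingleton G := (Nat.card_eq_one_iff_unique.mp hc).1
    obtain ⟨x, hx⟩ := exists_ne (0 : X)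
    refine ⟨x, hx, fun g => ?_⟩
    have : g = 1 := Subsingleton.elim g 1
    rw [this, map_one]
    rfl
  · push_neg at hc1
    obtain ⟨k, hk⟩ := hpk
    haveI : Nontrivial G := by
      rw [← Finite.one_lt_card_iff_nontrivial, hcard]; exact hc1
    have hpg : IsPGroup p G := IsPGroup.of_card (hcard.trans hk)
    haveI : Nontrivial (Subgroup.center G) := hpg.center_nontrivial
    -- element of order p in the center
    haveI : Fintype G := Fintype.ofFinite G
    have hZpg : IsPGroup p (Subgroup.center G) := hpg.to_subgroup _
    have hdvd : p ∣ Fintype.card (Subgroup.center G) := by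
      obtain ⟨m, hm⟩ := (IsPGroup.iff_card (p := p)).mp hZpg
      have hm1 : m ≠ 0 := by
        intro h0
        rw [h0, pow_zero] at hm
        have := Finite.one_lt_card_iff_nontrivial.mpr
          (inferInstance : Nontrivial (Subgroup.center G))
        omega
      rw [← Nat.card_eq_fintype_card, hm]
      exact dvd_pow_self p hm1
    obtain ⟨gc, hgc⟩ := exists_prime_orderOf_dvd_card p hdvd
    set g : G := (gc : G) with hg
    have hog : orderOf g = p :=
      (orderOf_injective (Subgroup.center G).subtype (Subgroup.subtype_injective _) gc).trans hgc
    have hgc2 : g ∈ Subgroup.center G := gc.2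
    have hgne : g ≠ 1 := by
      intro h1
      rw [h1, orderOf_one] at hog
      exact hp.one_lt.ne' hog.symm
    set τ : Module.End R X := ((ρ g : (Module.End R X)ˣ) : Module.End R X) with hτdef
    have hτp : τ ^ p = 1 := by
      have : (ρ g) ^ p = 1 := by
        rw [← map_pow, ← hog, pow_orderOf_eq_one, map_one]
      calc τ ^ p = (((ρ g) ^ p : (Module.End R X)ˣ) : Module.End R X) := by
            rw [Units.val_pow_eq_pow_val]
        _ = 1 := by rw [this]; rfl
    obtain ⟨x1, hx1ne, hx1fix⟩ := exists_fixed_of_pow_eq_one hp htors τ hτp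
    -- the fixed submodule of g
    set X1 : Submodule R X := LinearMap.ker (τ - 1) with hX1
    have hx1mem : x1 ∈ X1 := by
      rw [hX1, LinearMap.mem_ker, LinearMap.sub_apply, Module.End.one_apply, sub_eq_zero]
      exact hx1fix
    haveI hX1nt : Nontrivial X1 :=
      ⟨⟨⟨x1, hx1mem⟩, 0, fun h => hx1ne (by simpa using congrArg Subtype.val h)⟩⟩
    have hX1tors : ∀ y : X1, (p ^ n : ℕ) • y = 0 := by
      intro y
      apply Subtype.ext
      have : ((p ^ n : ℕ) • y : X1) = (p ^ n : ℕ) • (y : X) := rfl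
      rw [this, htors]
      rfl
    -- every ρ h commutes with τ and preserves X1
    have hcomm : ∀ h : G, Commute τ ((ρ h : (Module.End R X)ˣ) : Module.End R X) := by
      intro h
      have : ρ g * ρ h = ρ h * ρ g := by
        rw [← map_mul, ← map_mul, (Subgroup.mem_center_iff.mp hgc2 h)]
      exact congrArg Units.val this
    have hmap : ∀ h : G, ∀ y ∈ X1, ((ρ h : (Module.End R X)ˣ) : Module.End R X) y ∈ X1 := by
      intro h y hy
      rw [hX1, LinearMap.mem_ker, LinearMap.sub_apply, Module.End.one_apply, sub_eq_zero]
      have hyfix : τ y = y := by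
        have h0 : (τ - 1) y = 0 := hy
        rw [LinearMap.sub_apply, Module.End.one_apply, sub_eq_zero] at h0
        exact h0
      calc τ (((ρ h).1) y) = (τ * (ρ h).1) y := rfl
        _ = ((ρ h).1 * τ) y := by rw [(hcomm h).eq]
        _ = (ρ h).1 (τ y) := rfl
        _ = (ρ h).1 y := by rw [hyfix]
    -- the restricted action
    let ρ₁ : G →* (Module.End R X1)ˣ :=
      { toFun := fun h => ⟨((ρ h).1).restrict (hmap h), ((ρ h⁻¹).1).restrict (hmap h⁻¹),
          LinearMap.ext fun y => Subtype.ext (by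
            show ((ρ h).1) (((ρ h⁻¹).1) ↑y) = (↑y : X)
            calc ((ρ h).1) (((ρ h⁻¹).1) ↑y) = ((ρ h).1 * (ρ h⁻¹).1) ↑y := rfl
              _ = ((ρ (h * h⁻¹)).1) ↑y := by rw [← Units.val_mul, ← map_mul]
              _ = ↑y := by rw [mul_inv_cancel, map_one]; rfl),
          LinearMap.ext fun y => Subtype.ext (by
            show ((ρ h⁻¹).1) (((ρ h).1) ↑y) = (↑y : X)
            calc ((ρ h⁻¹).1) (((ρ h).1) ↑y) = ((ρ h⁻¹).1 * (ρ h).1) ↑y := rfl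
              _ = ((ρ (h⁻¹ * h)).1) ↑y := by rw [← Units.val_mul, ← map_mul]
              _ = ↑y := by rw [inv_mul_cancel, map_one]; rfl)⟩
        map_one' := by
          apply Units.ext
          refine LinearMap.ext fun y => Subtype.ext ?_
          show ((ρ 1).1) ↑y = (↑y : X)
          rw [map_one]; rfl
        map_mul' := fun h₁ h₂ => by
          apply Units.ext
          refine LinearMap.ext fun y => Subtype.ext ?_
          show ((ρ (h₁ * h₂)).1) ↑y = ((ρ h₁).1) (((ρ h₂).1) ↑y)
          rw [map_mul]
          rfl }
    -- g is in the kernel of ρ₁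
    have hgker : ρ₁ g = 1 := by
      apply Units.ext
      refine LinearMap.ext fun y => Subtype.ext ?_
      show ((ρ g).1) ↑y = (↑y : X)
      have h0 : (τ - 1) (↑y : X) = 0 := y.2
      rw [LinearMap.sub_apply, Module.End.one_apply, sub_eq_zero] at h0
      exact h0
    -- the range of ρ₁ is a smaller p-group
    set Γ := ρ₁.range with hΓ
    haveI hΓfin : Finite Γ := Set.Finite.to_subtype (by
      rw [MonoidHom.coe_range]
      exact Set.finite_range ρ₁)
    have hcardeq : Nat.card G = Nat.card Γ * Nat.card ρ₁.ker := by
      rw [Subgroup.card_eq_card_quotient_mul_card_subgroup ρ₁.ker]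
      congr 1
      exact Nat.card_congr (QuotientGroup.quotientKerEquivRange ρ₁).toEquiv
    have hkerge : p ≤ Nat.card ρ₁.ker := by
      have hle : Subgroup.zpowers g ≤ ρ₁.ker := Subgroup.zpowers_le.mpr hgker
      have := Subgroup.card_le_of_le hle
      rwa [Nat.card_zpowers, hog] at this
    have hΓpos : 0 < Nat.card Γ := Nat.card_pos
    have hΓlt : Nat.card Γ < c := by
      rw [← hcard, hcardeq]
      have h2p : 2 ≤ p := hp.two_le
      nlinarith [hΓpos, hkerge]
    have hΓdvd : Nat.card Γ ∣ c := by
      rw [← hcard, hcardeq]; exact Dvd.intro _ rfl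
    have hΓpow : ∃ j, Nat.card Γ = p ^ j := by
      obtain ⟨j, _, hj⟩ := (Nat.dvd_prime_pow hp).mp (hk ▸ hΓdvd)
      exact ⟨j, hj⟩
    obtain ⟨x, hxne, hxfix⟩ := IH (Nat.card Γ) hΓlt R ‹_› X1 inferInstance inferInstance n
      hX1tors hX1nt Γ inferInstance hΓfin rfl (by obtain ⟨j, hj⟩ := hΓpow; exact ⟨j, hj⟩)
      Γ.subtype
    refine ⟨(x : X), fun h0 => hxne (Subtype.ext h0), fun h => ?_⟩
    have hfix1 : ((ρ₁ h : (Module.End R X1)ˣ) : Module.End R X1) x = x :=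
      hxfix ⟨ρ₁ h, ⟨h, rfl⟩⟩
    have := congrArg Subtype.val hfix1
    rw [show (((ρ₁ h : (Module.End R X1)ˣ) : Module.End R X1) x : X)
        = ((ρ h).1) (x : X) from rfl] at this
    exact this

end PGroupFixed

/-- For a noetherian ring `R`, a finitely generated `p`-power torsion `R`-module
`M` with an `R`-linear action of a finite `p`-group `G`, and `𝔭` a minimal prime of the
support of `M`, the length of `(M/M^G)_𝔭` over `R_𝔭` is strictly smaller than the length
of `M_𝔭` over `R_𝔭`. -/

theorem length_localization_quotient_fixedPoints_lt
    (R : Type) [CommRing R] [IsNoetherianRing R]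
    (p : ℕ) (hp : p.Prime)
    (M : Type) [AddCommGroup M] [Module R M] [Module.Finite R M]
    (htors : ∃ n : ℕ, ∀ m : M, (p ^ n : ℕ) • m = 0)
    (G : Type) [Group G] [Finite G] (hG : ∃ k : ℕ, Nat.card G = p ^ k)
    (ρ : G →* (M ≃ₗ[R] M))
    (𝔭 : PrimeSpectrum R) (h𝔭 : 𝔭 ∈ Module.support R M)
    (hmin : ∀ 𝔮 ∈ Module.support R M, 𝔮 ≤ 𝔭 → 𝔮 = 𝔭) :
    moduleLength (Localization 𝔭.asIdeal.primeCompl)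
        (LocalizedModule 𝔭.asIdeal.primeCompl
          (M ⧸ (⨅ g : G, LinearMap.ker ((ρ g).toLinearMap - LinearMap.id)))) <
    moduleLength (Localization 𝔭.asIdeal.primeCompl)
        (LocalizedModule 𝔭.asIdeal.primeCompl M) := by
  classical
  obtain ⟨n, htorsn⟩ := htors
  haveI h𝔭p : 𝔭.asIdeal.IsPrime := 𝔭.2
  set S := 𝔭.asIdeal.primeCompl with hS
  set R' := Localization S with hR'
  set N : Submodule R M := ⨅ g : G, LinearMap.ker ((ρ g).toLinearMap - LinearMap.id) with hN
  set Mloc := LocalizedModule S M with hMloc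
  set Qloc := LocalizedModule S (M ⧸ N) with hQloc
  -- basic instances
  haveI : Module.Finite R' Mloc :=
    Module.Finite.of_isLocalizedModule (Rₚ := R') S (LocalizedModule.mkLinearMap S M)
  haveI : IsNoetherianRing R' := IsLocalization.isNoetherianRing S R' inferInstance
  haveI : IsNoetherian R' Mloc := isNoetherian_of_isNoetherianRing_of_finite R' Mloc
  set 𝔪 := IsLocalRing.maximalIdeal R' with h𝔪
  -- every prime over the annihilator of Mloc is 𝔪
  have hprime : ∀ Q : Ideal R', Q.IsPrime → Module.annihilator R' Mloc ≤ Q → Q = 𝔪 := by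
    intro Q hQp hQann
    haveI := hQp
    set f := algebraMap R R' with hf
    set q : Ideal R := Ideal.comap f Q with hq
    haveI hqp : q.IsPrime := Ideal.IsPrime.comap f
    have hqle : q ≤ 𝔭.asIdeal := by
      intro x hx
      by_contra hx𝔭
      have hxS : x ∈ S := hx𝔭
      have hunit : IsUnit (f x) := IsLocalization.map_units R' ⟨x, hxS⟩
      exact hQp.ne_top (Ideal.eq_top_of_isUnit_mem Q hx hunit)
    have hannq : Module.annihilator R M ≤ q := by
      intro a ha
      show f a ∈ Q
      apply hQann
      rw [Module.mem_annihilator]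
      intro m
      induction m using LocalizedModule.induction_on with
      | _ m s =>
        rw [algebraMap_smul, LocalizedModule.smul'_mk, Module.mem_annihilator.mp ha m,
          LocalizedModule.zero_mk]
    have hqsupp : (⟨q, hqp⟩ : PrimeSpectrum R) ∈ Module.support R M :=
      (Module.mem_support_iff_of_finite).mpr hannq
    have hqeq : (⟨q, hqp⟩ : PrimeSpectrum R) = 𝔭 := hmin _ hqsupp hqle
    have hqeq' : q = 𝔭.asIdeal := congrArg PrimeSpectrum.asIdeal hqeq
    have hcm : Ideal.comap f 𝔪 = 𝔭.asIdeal :=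
      IsLocalization.AtPrime.comap_maximalIdeal R' 𝔭.asIdeal
    calc Q = Ideal.map f (Ideal.comap f Q) := (IsLocalization.map_comap S R' Q).symm
      _ = Ideal.map f (Ideal.comap f 𝔪) := by rw [← hq, hqeq', hcm]
      _ = 𝔪 := IsLocalization.map_comap S R' 𝔪
  have hrad : 𝔪 ≤ (Module.annihilator R' Mloc).radical := by
    rw [Ideal.radical_eq_sInf]
    refine le_sInf ?_
    rintro J ⟨hJ1, hJ2⟩
    exact le_of_eq (hprime J hJ2 hJ1).symm
  have h𝔪fg : 𝔪.FG := IsNoetherian.noetherian 𝔪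
  obtain ⟨k', hk'⟩ := Ideal.exists_pow_le_of_le_radical_of_fg hrad h𝔪fg
  have hkill : ∀ a ∈ 𝔪 ^ k', ∀ x : Mloc, a • x = 0 :=
    fun a ha x => Module.mem_annihilator.mp (hk' ha) x
  obtain ⟨nX, hnX⟩ := chainBound_pow 𝔪 (IsLocalRing.maximalIdeal.isMaximal R') k' Mloc
    inferInstance inferInstance inferInstance hkill
  -- torsion and nontriviality of Mloc
  haveI hnt : Nontrivial Mloc := h𝔭
  have htorsloc : ∀ x : Mloc, (p ^ n : ℕ) • x = 0 := by
    intro x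
    induction x using LocalizedModule.induction_on with
    | _ m s =>
      rw [← Nat.cast_smul_eq_nsmul R, LocalizedModule.smul'_mk, Nat.cast_smul_eq_nsmul,
        htorsn, LocalizedModule.zero_mk]
  -- the G-action on Mloc
  let φ : G → (Mloc →ₗ[R'] Mloc) := fun g => LocalizedModule.map S (ρ g).toLinearMap
  have hφmk : ∀ g m s, φ g (LocalizedModule.mk m s) = LocalizedModule.mk (ρ g m) s := by
    intro g m s
    exact LocalizedModule.map_mk S (ρ g).toLinearMap m s
  have hφcomp : ∀ g h : G, φ g * φ h = φ (g * h) := by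
    intro g h
    apply LinearMap.ext
    intro x
    induction x using LocalizedModule.induction_on with
    | _ m s =>
      rw [Module.End.mul_apply, hφmk, hφmk, hφmk, map_mul]
      rfl
  have hφone : φ 1 = 1 := by
    apply LinearMap.ext
    intro x
    induction x using LocalizedModule.induction_on with
    | _ m s =>
      rw [hφmk, map_one]
      rfl
  let σ : G →* (Module.End R' Mloc)ˣ :=
    { toFun := fun g => ⟨φ g, φ g⁻¹,
        by rw [hφcomp, mul_inv_cancel, hφone],
        by rw [hφcomp, inv_mul_cancel, hφone]⟩
      map_one' := by apply Units.ext; exact hφone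
      map_mul' := fun g h => by apply Units.ext; exact (hφcomp g h).symm }
  obtain ⟨ξ, hξ0, hξfix⟩ := exists_fixed_of_pgroup hp (Nat.card G) R' inferInstance Mloc
    inferInstance inferInstance n htorsloc hnt G inferInstance inferInstance rfl hG σ
  -- extract a nonzero element of N in the localization
  haveI : Fintype G := Fintype.ofFinite G
  have hker : ∃ y : M, LocalizedModule.mk y (1 : S) ≠ 0 ∧ y ∈ N := by
    obtain ⟨x, s, hxs⟩ : ∃ (x : M) (s : S), ξ = LocalizedModule.mk x s := by
      induction ξ using LocalizedModule.induction_on with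
      | _ m s => exact ⟨m, s, rfl⟩
    -- for each g, a multiplier killing ρ g x - x
    have hug : ∀ g : G, ∃ t : S, (t : R) • ((ρ g) x - x) = 0 := by
      intro g
      have : φ g (LocalizedModule.mk x s) = LocalizedModule.mk x s := by
        rw [← hxs]; exact hξfix g
      rw [hφmk] at this
      obtain ⟨u, hu⟩ := LocalizedModule.mk_eq.mp this
      refine ⟨u * s, ?_⟩
      have h1 : (u * s : S) • ((ρ g) x) = (u * s : S) • x := by
        rw [mul_smul, mul_smul]
        exact hu
      rw [smul_sub]
      rw [Submonoid.smul_def, Submonoid.smul_def] at h1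
      rw [h1, sub_self]
    choose tg htg using hug
    set t : S := ∏ g : G, tg g with ht
    refine ⟨(t : R) • x, ?_, ?_⟩
    · -- nonzero
      intro h0
      apply hξ0
      rw [hxs]
      have h1 : LocalizedModule.mk ((t : R) • x) (1 : S) = LocalizedModule.mk (0 : M) (1 : S) := by
        rw [h0, LocalizedModule.zero_mk]
      obtain ⟨u, hu⟩ := LocalizedModule.mk_eq.mp h1
      simp only [one_smul, smul_zero] at hu
      have hu' : ((u : R) * (t : R)) • x = 0 := by
        rw [mul_smul]
        rw [Submonoid.smul_def] at hu
        exact hu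
      rw [← LocalizedModule.zero_mk (s := s), LocalizedModule.mk_eq]
      refine ⟨u * t, ?_⟩
      rw [smul_zero, smul_zero]
      rw [Submonoid.smul_def, Submonoid.smul_def, smul_smul]
      push_cast
      rw [show ((u : R) * (t : R)) * (s : R) = (s : R) * ((u : R) * (t : R)) from
        mul_comm _ _, mul_smul, hu', smul_zero]
    · -- in N
      rw [hN, Submodule.mem_iInf]
      intro g
      rw [LinearMap.mem_ker, LinearMap.sub_apply, LinearMap.id_apply, sub_eq_zero]
      show (ρ g) ((t : R) • x) = (t : R) • x
      rw [map_smul]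
      have hsplit : (t : R) = ((∏ h ∈ Finset.univ.erase g, tg h : S) : R) * (tg g : R) := by
        rw [ht]
        norm_cast
        rw [Finset.prod_erase_mul _ _ (Finset.mem_univ g)]
      have : (t : R) • ((ρ g) x - x) = 0 := by
        rw [hsplit, mul_smul, htg g, smul_zero]
      rw [smul_sub, sub_eq_zero] at this
      exact this
  obtain ⟨y, hy0, hyN⟩ := hker
  -- the localized quotient map
  let fℓ : Mloc →ₗ[R'] Qloc := LocalizedModule.map S N.mkQ
  have hfsurj : Function.Surjective fℓ := by
    intro z
    induction z using LocalizedModule.induction_on with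
    | _ m s =>
      obtain ⟨x, rfl⟩ := Submodule.Quotient.mk_surjective N m
      exact ⟨LocalizedModule.mk x s, LocalizedModule.map_mk S N.mkQ x s⟩
  have hfker : LinearMap.ker fℓ ≠ ⊥ := by
    have hmem : LocalizedModule.mk y (1 : S) ∈ LinearMap.ker fℓ := by
      rw [LinearMap.mem_ker]
      show LocalizedModule.map S N.mkQ (LocalizedModule.mk y 1) = 0
      rw [LocalizedModule.map_mk]
      have : N.mkQ y = 0 := by
        rw [Submodule.mkQ_apply, Submodule.Quotient.mk_eq_zero]
        exact hyN
      rw [this, LocalizedModule.zero_mk]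
    intro hbot
    rw [hbot, Submodule.mem_bot] at hmem
    exact hy0 hmem
  show Order.krullDim (Submodule R' Qloc) < Order.krullDim (Submodule R' Mloc)
  exact krullDim_submodule_lt fℓ hfsurj hfker hnX
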